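/- arXiv:2006.10853 — 2 statements merged into one kernel-verified Lean document; each statement's English description precedes it below -/
import Mathlib

section
/- For every integer K ≥ 1 and every real x, the partial Fourier sum of the half-wave rectified sine satisfies the uniform error bound |max(sin x, 0) − (1/π + (1/2)·sin x − (2/π)·Σ_{k=1}^{K} cos(2kx)/(4k² − 1))| ≤ 1/(π(2K + 1)). -/
open Finset

noncomputable section

namespace ReluSinAux

open Real MeasureTheory intervalIntegral Complex

def g : ℝ → ℂ := fun x => ((max (Real.sin x) 0 : ℝ) : ℂ)

lemma g_periodic : Function.Periodic g (2 * π) := fun x => by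
  simp [g, Real.sin_add_two_pi]

lemma g_continuous : Continuous g := by
  unfold g; fun_prop

instance : Fact (0 < 2 * π) := ⟨by positivity⟩

def F : C(AddCircle (2 * π), ℂ) :=
  ⟨g_periodic.lift, g_continuous.quotient_liftOn' _⟩

lemma F_coe (x : ℝ) : F (x : AddCircle (2 * π)) = ((max (Real.sin x) 0 : ℝ) : ℂ) :=
  g_periodic.lift_coe x

lemma intE (m : ℤ) (hm : m ≠ 0) :
    (∫ x in (0:ℝ)..π, Complex.exp (m * Complex.I * x)) = ((-1 : ℂ) ^ m - 1) / (m * Complex.I) := by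
  rw [integral_exp_mul_complex (by simp [hm, Complex.I_ne_zero])]
  congr 1
  rw [mul_assoc, mul_comm Complex.I, ← mul_assoc, mul_assoc (m:ℂ), Complex.exp_int_mul,
    Complex.exp_pi_mul_I]
  simp

lemma intSin (n : ℤ) :
    (∫ x in (0:ℝ)..π, Complex.exp (-(n:ℂ) * Complex.I * x) * Complex.sin x)
      = Complex.I/2 * ((∫ x in (0:ℝ)..π, Complex.exp (((-n-1 : ℤ):ℂ) * Complex.I * x))
          - ∫ x in (0:ℝ)..π, Complex.exp (((1-n : ℤ):ℂ) * Complex.I * x)) := by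
  have key : ∀ x : ℝ, Complex.exp (-(n:ℂ) * Complex.I * x) * Complex.sin x
      = Complex.I/2 * (Complex.exp (((-n-1 : ℤ):ℂ) * Complex.I * x)
          - Complex.exp (((1-n : ℤ):ℂ) * Complex.I * x)) := by
    intro x
    have e1 : Complex.exp (-(n:ℂ) * Complex.I * x) * Complex.exp (-(x:ℂ) * Complex.I)
        = Complex.exp (((-n-1 : ℤ):ℂ) * Complex.I * x) := by
      rw [← Complex.exp_add]; push_cast; ring_nf
    have e2 : Complex.exp (-(n:ℂ) * Complex.I * x) * Complex.exp ((x:ℂ) * Complex.I)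
        = Complex.exp (((1-n : ℤ):ℂ) * Complex.I * x) := by
      rw [← Complex.exp_add]; push_cast; ring_nf
    rw [Complex.sin]
    linear_combination (Complex.I/2) * e1 - (Complex.I/2) * e2
  simp_rw [key]
  rw [intervalIntegral.integral_const_mul, intervalIntegral.integral_sub
    ((by fun_prop : Continuous fun x:ℝ => Complex.exp (((-n-1 : ℤ):ℂ) * Complex.I * x)).intervalIntegrable _ _)
    ((by fun_prop : Continuous fun x:ℝ => Complex.exp (((1-n : ℤ):ℂ) * Complex.I * x)).intervalIntegrable _ _)]

lemma neg_one_zpow_sq (n : ℤ) : ((-1 : ℂ) ^ n) * ((-1 : ℂ) ^ n) = 1 := by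
  rw [← zpow_add₀ (by norm_num : (-1:ℂ) ≠ 0)]
  rw [show n + n = 2 * n by ring, zpow_mul]
  norm_num

lemma neg_one_zpow_inv (n : ℤ) : ((-1 : ℂ) ^ n)⁻¹ = (-1 : ℂ) ^ n :=
  inv_eq_of_mul_eq_one_left (neg_one_zpow_sq n)

lemma intSin_one :
    (∫ x in (0:ℝ)..π, Complex.exp (-((1:ℤ):ℂ) * Complex.I * x) * Complex.sin x)
      = -(π * Complex.I) / 2 := by
  have h := intSin 1
  rw [intE (-1-1) (by norm_num)] at h
  norm_num at h ⊢
  rw [h]; ring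

lemma intSin_negone :
    (∫ x in (0:ℝ)..π, Complex.exp (-((-1:ℤ):ℂ) * Complex.I * x) * Complex.sin x)
      = π * Complex.I / 2 := by
  have h := intSin (-1)
  rw [intE (1-(-1)) (by norm_num)] at h
  norm_num at h ⊢
  rw [h]; ring

lemma intSin_ne (n : ℤ) (h1 : n ≠ 1) (h2 : n ≠ -1) :
    (∫ x in (0:ℝ)..π, Complex.exp (-(n:ℂ) * Complex.I * x) * Complex.sin x)
      = (1 + (-1 : ℂ) ^ n) / (1 - (n:ℂ)^2) := by
  have hA : (-n-1 : ℤ) ≠ 0 := by omega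
  have hB : (1-n : ℤ) ≠ 0 := by omega
  have hw : ((-1 : ℂ) ^ (-n-1 : ℤ)) = -(-1:ℂ)^n := by
    rw [show (-n-1 : ℤ) = -(n+1) by ring, zpow_neg, zpow_add₀ (by norm_num : (-1:ℂ) ≠ 0)]
    simp [inv_neg, neg_one_zpow_inv]
  have hw2 : ((-1 : ℂ) ^ (1-n : ℤ)) = -(-1:ℂ)^n := by
    rw [show (1-n : ℤ) = -(n-1) by ring, zpow_neg, zpow_sub₀ (by norm_num : (-1:ℂ) ≠ 0)]
    rw [show ((-1:ℂ)^n / (-1:ℂ)^(1:ℤ)) = -(-1:ℂ)^n by rw [zpow_one]; field_simp]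
    simp [inv_neg, neg_one_zpow_inv]
  have h := intSin n
  rw [intE _ hA, intE _ hB, hw, hw2] at h
  rw [h]
  have hn1 : ((n:ℂ) + 1) ≠ 0 := by
    intro hc; apply h2; exact_mod_cast (by linear_combination hc : (n:ℂ) = -1)
  have hn2 : (1 - (n:ℂ)) ≠ 0 := by
    intro hc; apply h1; exact_mod_cast (by linear_combination -hc : (n:ℂ) = 1)
  have hsq : (1 - (n:ℂ)^2) ≠ 0 := by
    intro hc
    rcases mul_eq_zero.mp (by linear_combination hc : (1 - (n:ℂ)) * (1 + (n:ℂ)) = 0) with h' | h'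
    · exact hn2 h'
    · exact hn1 (by linear_combination h')
  have hm1 : (-(n:ℂ) - 1) ≠ 0 := fun hc => hn1 (by linear_combination -hc)
  push_cast
  field_simp [hm1, hn2, hsq, Complex.I_ne_zero]
  ring

lemma integral_g (n : ℤ) :
    (∫ x in (0:ℝ)..(2*π), Complex.exp (-(n:ℂ) * Complex.I * x) * g x)
      = ∫ x in (0:ℝ)..π, Complex.exp (-(n:ℂ) * Complex.I * x) * Complex.sin x := by
  have hcont : Continuous fun x : ℝ => Complex.exp (-(n:ℂ) * Complex.I * x) * g x := by
    apply Continuous.mul _ g_continuous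
    fun_prop
  have hsplit := intervalIntegral.integral_add_adjacent_intervals (a := (0:ℝ)) (b := π)
    (c := 2*π) (μ := volume) (hcont.intervalIntegrable _ _) (hcont.intervalIntegrable _ _)
  have h2 : (∫ x in π..(2*π), Complex.exp (-(n:ℂ) * Complex.I * x) * g x) = 0 := by
    have heq : Set.EqOn (fun x : ℝ => Complex.exp (-(n:ℂ) * Complex.I * x) * g x) 0
        (Set.uIcc π (2*π)) := by
      intro x hx
      rw [Set.uIcc_of_le (by linarith [pi_pos])] at hx
      have hs : Real.sin x ≤ 0 := by
        have h0 : Real.sin (x - π) = -Real.sin x := Real.sin_sub_pi x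
        have h1 : 0 ≤ Real.sin (x - π) :=
          Real.sin_nonneg_of_nonneg_of_le_pi (by linarith [hx.1]) (by linarith [hx.2])
        linarith
      simp [g, max_eq_right hs]
    rw [intervalIntegral.integral_congr heq]
    simp
  have h1 : (∫ x in (0:ℝ)..π, Complex.exp (-(n:ℂ) * Complex.I * x) * g x)
      = ∫ x in (0:ℝ)..π, Complex.exp (-(n:ℂ) * Complex.I * x) * Complex.sin x := by
    apply intervalIntegral.integral_congr
    intro x hx
    rw [Set.uIcc_of_le (by positivity)] at hx
    have hs : 0 ≤ Real.sin x := Real.sin_nonneg_of_nonneg_of_le_pi hx.1 hx.2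
    simp only [g, max_eq_left hs, Complex.ofReal_sin]
  rw [← hsplit, h2, add_zero, h1]

lemma coeff (n : ℤ) : fourierCoeff (⇑F) n
    = (1/(2*π) : ℝ) • ∫ x in (0:ℝ)..π, Complex.exp (-(n:ℂ) * Complex.I * x) * Complex.sin x := by
  rw [fourierCoeff_eq_intervalIntegral (⇑F) n 0, zero_add]
  rw [show (∫ x in (0:ℝ)..(2*π), (fourier (T := 2*π) (-n)) (x : AddCircle (2*π)) • F (x : AddCircle (2*π)))
      = ∫ x in (0:ℝ)..(2*π), Complex.exp (-(n:ℂ) * Complex.I * x) * g x from ?_, integral_g]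
  apply intervalIntegral.integral_congr
  intro x _
  show (fourier (T := 2*π) (-n)) (x : AddCircle (2*π)) • F (x : AddCircle (2*π))
      = Complex.exp (-(n:ℂ) * Complex.I * x) * g x
  rw [smul_eq_mul, fourier_coe_apply, F_coe]
  simp only [g]
  have hπ : (π : ℂ) ≠ 0 := Complex.ofReal_ne_zero.mpr Real.pi_ne_zero
  congr 2
  push_cast
  field_simp

lemma coeff_zero : fourierCoeff (⇑F) 0 = 1/(π:ℂ) := by
  rw [coeff 0, intSin_ne 0 (by norm_num) (by norm_num)]
  have hπ : (π : ℂ) ≠ 0 := Complex.ofReal_ne_zero.mpr Real.pi_ne_zero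
  rw [Complex.real_smul]
  push_cast
  norm_num
  field_simp

lemma coeff_one : fourierCoeff (⇑F) 1 = -Complex.I/4 := by
  have h := coeff 1
  rw [show ((1:ℤ):ℂ) = ((1:ℤ):ℂ) from rfl] at h
  rw [h, intSin_one]
  have hπ : (π : ℂ) ≠ 0 := Complex.ofReal_ne_zero.mpr Real.pi_ne_zero
  rw [Complex.real_smul]
  push_cast
  field_simp
  ring

lemma coeff_negone : fourierCoeff (⇑F) (-1) = Complex.I/4 := by
  have h := coeff (-1)
  rw [h, show (((-1):ℤ):ℂ) = (((-1):ℤ):ℂ) from rfl, intSin_negone]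
  have hπ : (π : ℂ) ≠ 0 := Complex.ofReal_ne_zero.mpr Real.pi_ne_zero
  rw [Complex.real_smul]
  push_cast
  field_simp
  ring

lemma coeff_ne (n : ℤ) (h1 : n ≠ 1) (h2 : n ≠ -1) :
    fourierCoeff (⇑F) n = (1 + (-1 : ℂ) ^ n) / (2*(π:ℂ)*(1 - (n:ℂ)^2)) := by
  rw [coeff n, intSin_ne n h1 h2]
  have hπ : (π : ℂ) ≠ 0 := Complex.ofReal_ne_zero.mpr Real.pi_ne_zero
  have hsq : (1 - (n:ℂ)^2) ≠ 0 := by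
    intro hc
    have hn1 : ((n:ℂ) + 1) ≠ 0 := by
      intro hc'; apply h2; exact_mod_cast (by linear_combination hc' : (n:ℂ) = -1)
    have hn2 : (1 - (n:ℂ)) ≠ 0 := by
      intro hc'; apply h1; exact_mod_cast (by linear_combination -hc' : (n:ℂ) = 1)
    rcases mul_eq_zero.mp (by linear_combination hc : (1 - (n:ℂ)) * (1 + (n:ℂ)) = 0) with h' | h'
    · exact hn2 h'
    · exact hn1 (by linear_combination h')
  rw [Complex.real_smul]
  push_cast
  field_simp

lemma coeff_norm_le (n : ℤ) (hn : 2 ≤ n.natAbs) : ‖fourierCoeff (⇑F) n‖ ≤ 1 / (n:ℝ)^2 := by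
  have h1 : n ≠ 1 := by omega
  have h2 : n ≠ -1 := by omega
  rw [coeff_ne n h1 h2, norm_div]
  have hn2 : (4:ℝ) ≤ (n:ℝ)^2 := by
    have h5 : (2:ℤ) ≤ |n| := by rw [Int.abs_eq_natAbs]; omega
    have h4 : (2:ℝ) ≤ |(n:ℝ)| := by rw [← Int.cast_abs]; exact_mod_cast h5
    nlinarith [_root_.sq_abs (n:ℝ)]
  have hnum : ‖1 + (-1:ℂ)^n‖ ≤ 2 := by
    calc ‖1 + (-1:ℂ)^n‖ ≤ ‖(1:ℂ)‖ + ‖(-1:ℂ)^n‖ := norm_add_le _ _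
    _ = 2 := by rw [norm_one, norm_zpow]; norm_num
  have hden : ‖2*(π:ℂ)*(1 - (n:ℂ)^2)‖ = 2*π*((n:ℝ)^2 - 1) := by
    have hre : (2*(π:ℂ)*(1 - (n:ℂ)^2)) = (((2*π*(1 - (n:ℝ)^2)) : ℝ) : ℂ) := by push_cast; ring
    rw [hre, Complex.norm_real, Real.norm_eq_abs, abs_of_nonpos (by nlinarith [pi_pos])]
    ring
  rw [hden]
  have hpos : (0:ℝ) < 2*π*((n:ℝ)^2 - 1) := by nlinarith [pi_pos]
  rw [div_le_div_iff₀ hpos (by nlinarith)]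
  calc ‖1 + (-1:ℂ)^n‖ * (n:ℝ)^2 ≤ 2 * (n:ℝ)^2 := by
        apply mul_le_mul_of_nonneg_right hnum (by positivity)
    _ ≤ 1 * (2*π*((n:ℝ)^2 - 1)) := by nlinarith [pi_gt_three]

lemma summable_coeff : Summable (fourierCoeff (⇑F)) := by
  apply Summable.of_norm_bounded_eventually (g := fun n : ℤ => 1/(n:ℝ)^2)
    (summable_one_div_int_pow.mpr one_lt_two)
  rw [Filter.eventually_cofinite]
  apply Set.Finite.subset (Set.finite_Icc (-1:ℤ) 1)
  intro n hn
  simp only [Set.mem_setOf_eq] at hn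
  by_contra hmem
  simp only [Set.mem_Icc, not_and_or, not_le] at hmem
  exact hn (coeff_norm_le n (by rcases hmem with h | h <;> omega))

lemma fourier_eq (m : ℤ) (x : ℝ) :
    fourier (T := 2*π) m (x : AddCircle (2*π)) = Complex.exp (m * Complex.I * x) := by
  rw [fourier_coe_apply]
  have hπ : (π : ℂ) ≠ 0 := Complex.ofReal_ne_zero.mpr Real.pi_ne_zero
  congr 1
  push_cast
  field_simp

lemma hasSum_main (x : ℝ) :
    HasSum (fun k : ℕ => Real.cos (2*((k:ℝ)+1)*x) / (4*((k:ℝ)+1)^2 - 1))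
      ((π/2) * (1/π + Real.sin x / 2 - max (Real.sin x) 0)) := by
  have hπ : (π : ℂ) ≠ 0 := Complex.ofReal_ne_zero.mpr Real.pi_ne_zero
  have hπ' : π ≠ 0 := Real.pi_ne_zero
  have H := has_pointwise_sum_fourier_series_of_summable summable_coeff (x : AddCircle (2*π))
  set t : ℤ → ℂ := fun i => fourierCoeff (⇑F) i • fourier i (x : AddCircle (2*π)) with ht
  have H2 := H.nat_add_neg
  have H3 := (hasSum_nat_add_iff' 2).mpr H2
  -- sum over n of f (n+2) where f n = t n + t (-n)
  have hodd : ∀ n : ℕ, n ∉ Set.range (fun k : ℕ => 2*k) →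
      (fun n : ℕ => t ((n:ℤ)+2) + t (-((n:ℤ)+2))) n = 0 := by
    intro n hn
    have hodd' : Odd (n : ℤ) := by
      rcases Nat.even_or_odd n with he | ho
      · exact absurd (by rcases he with ⟨r, hr⟩; exact ⟨r, by dsimp; omega⟩) hn
      · exact_mod_cast ho
    have o1 : Odd ((n:ℤ)+2) := by rcases hodd' with ⟨r, hr⟩; exact ⟨r+1, by omega⟩
    have o2 : Odd (-((n:ℤ)+2)) := o1.neg
    have z1 : fourierCoeff (⇑F) ((n:ℤ)+2) = 0 := by
      rw [coeff_ne _ (by omega) (by omega), o1.neg_one_zpow]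
      simp
    have z2 : fourierCoeff (⇑F) (-((n:ℤ)+2)) = 0 := by
      rw [coeff_ne _ (by omega) (by omega), o2.neg_one_zpow]
      simp
    simp only [ht, z1, z2, zero_smul, add_zero]
  have H3' : HasSum (fun n : ℕ => t ((n:ℤ)+2) + t (-((n:ℤ)+2)))
      (F (x : AddCircle (2*π)) + t 0 - ∑ i ∈ Finset.range 2, (t (i:ℤ) + t (-(i:ℤ)))) := by
    have hfun : (fun n : ℕ => t ((n:ℤ)+2) + t (-((n:ℤ)+2)))
        = fun n : ℕ => t (((n+2:ℕ)):ℤ) + t (-((n+2:ℕ):ℤ)) := by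
      funext n; push_cast; ring_nf
    rw [hfun]
    exact H3
  have H4 := (Function.Injective.hasSum_iff
      (fun a b hab => by dsimp at hab; omega : Function.Injective (fun k : ℕ => 2*k)) hodd).mpr H3'
  -- H4 : HasSum (fun k => t (2k+2) + t (-(2k+2))) (F x + t 0 - ∑ i in range 2, (t i + t (-i)))
  have key : ∀ k : ℕ, t ((((2*k : ℕ)):ℤ)+2) + t (-((((2*k : ℕ)):ℤ)+2))
      = (((-(2/π) * (Real.cos (2*((k:ℝ)+1)*x) / (4*((k:ℝ)+1)^2 - 1))) : ℝ) : ℂ) := by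
    intro k
    have hm : (((2*k : ℕ)):ℤ) + 2 = 2*(k:ℤ)+2 := by push_cast; ring
    rw [hm]
    have hev : Even (2*(k:ℤ)+2) := ⟨(k:ℤ)+1, by ring⟩
    have hev' : Even (-(2*(k:ℤ)+2)) := hev.neg
    have hc1 : fourierCoeff (⇑F) (2*(k:ℤ)+2)
        = (1 + (-1:ℂ)^(2*(k:ℤ)+2)) / (2*(π:ℂ)*(1 - ((2*(k:ℤ)+2 : ℤ):ℂ)^2)) := coeff_ne _ (by omega) (by omega)
    have hc2 : fourierCoeff (⇑F) (-(2*(k:ℤ)+2))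
        = (1 + (-1:ℂ)^(-(2*(k:ℤ)+2))) / (2*(π:ℂ)*(1 - ((-(2*(k:ℤ)+2) : ℤ):ℂ)^2)) := coeff_ne _ (by omega) (by omega)
    rw [hev.neg_one_zpow] at hc1
    rw [hev'.neg_one_zpow] at hc2
    simp only [ht, smul_eq_mul, fourier_eq]
    rw [hc1, hc2]
    have hexp : Complex.exp (((2*(k:ℤ)+2 : ℤ):ℂ) * Complex.I * x)
        + Complex.exp (((-(2*(k:ℤ)+2) : ℤ):ℂ) * Complex.I * x)
        = 2 * Complex.cos ((2*((k:ℝ)+1)*x : ℝ):ℂ) := by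
      rw [Complex.cos]
      rw [show (((2*(k:ℤ)+2 : ℤ):ℂ) * Complex.I * x) = ((2*((k:ℝ)+1)*x : ℝ):ℂ) * Complex.I by
        push_cast; ring]
      rw [show (((-(2*(k:ℤ)+2) : ℤ):ℂ) * Complex.I * x) = -(((2*((k:ℝ)+1)*x : ℝ):ℂ)) * Complex.I by
        push_cast; ring]
      ring
    have harr : ((2*(k:ℤ)+2 : ℤ):ℂ)^2 = ((-(2*(k:ℤ)+2) : ℤ):ℂ)^2 := by push_cast; ring
    rw [← harr]
    have hden : (1 - ((2*(k:ℤ)+2 : ℤ):ℂ)^2) ≠ 0 := by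
      have : ((2*(k:ℤ)+2 : ℤ):ℂ)^2 = (((2*(k:ℝ)+2)^2 : ℝ) : ℂ) := by push_cast; ring
      rw [this]
      intro hc
      have hxx : (1 : ℝ) - (2*(k:ℝ)+2)^2 = 0 := by
        exact_mod_cast (by push_cast at hc ⊢; linear_combination hc : ((1 - (2*(k:ℝ)+2)^2 : ℝ):ℂ) = 0)
      have hk0 : (0:ℝ) ≤ (k:ℝ) := Nat.cast_nonneg k
      nlinarith [sq_nonneg ((k:ℝ))]
    calc (1+1) / (2*(π:ℂ)*(1 - ((2*(k:ℤ)+2 : ℤ):ℂ)^2)) * Complex.exp (((2*(k:ℤ)+2 : ℤ):ℂ) * Complex.I * x)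
          + (1+1) / (2*(π:ℂ)*(1 - ((2*(k:ℤ)+2 : ℤ):ℂ)^2)) * Complex.exp (((-(2*(k:ℤ)+2) : ℤ):ℂ) * Complex.I * x)
        = (1+1) / (2*(π:ℂ)*(1 - ((2*(k:ℤ)+2 : ℤ):ℂ)^2))
            * (Complex.exp (((2*(k:ℤ)+2 : ℤ):ℂ) * Complex.I * x)
              + Complex.exp (((-(2*(k:ℤ)+2) : ℤ):ℂ) * Complex.I * x)) := by ring
      _ = (1+1) / (2*(π:ℂ)*(1 - ((2*(k:ℤ)+2 : ℤ):ℂ)^2)) * (2 * Complex.cos ((2*((k:ℝ)+1)*x : ℝ):ℂ)) := by rw [hexp]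
      _ = (((-(2/π) * (Real.cos (2*((k:ℝ)+1)*x) / (4*((k:ℝ)+1)^2 - 1))) : ℝ) : ℂ) := by
          rw [← Complex.ofReal_cos]
          have hd2 : ((4*((k:ℝ)+1)^2 - 1 : ℝ) : ℂ) ≠ 0 := by
            rw [Complex.ofReal_ne_zero]
            have hk0 : (0:ℝ) ≤ (k:ℝ) := Nat.cast_nonneg k
            nlinarith [sq_nonneg ((k:ℝ))]
          push_cast at hden hd2 ⊢
          field_simp [hπ, hden, hd2]
          rw [show (1:ℂ) - 2^2*((k:ℂ)+1)^2 = -(((k:ℂ)+1)^2*4 - 1) by ring, div_neg]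
          ring
  simp only [Function.comp_def] at H4
  simp only [key] at H4
  have ht0 : t 0 = ((1/π : ℝ) : ℂ) := by
    show fourierCoeff (⇑F) 0 • fourier (T := 2*π) 0 ((x:ℝ) : AddCircle (2*π)) = ((1/π : ℝ) : ℂ)
    rw [coeff_zero, fourier_zero, smul_eq_mul, mul_one]
    push_cast
    ring
  have hsin : t ((1:ℕ):ℤ) + t (-((1:ℕ):ℤ)) = Complex.sin x / 2 := by
    show fourierCoeff (⇑F) _ • fourier _ ((x:ℝ) : AddCircle (2*π))
        + fourierCoeff (⇑F) _ • fourier _ ((x:ℝ) : AddCircle (2*π)) = Complex.sin x / 2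
    rw [smul_eq_mul, smul_eq_mul, fourier_eq, fourier_eq]
    rw [show ((1:ℕ):ℤ) = 1 by norm_num, coeff_one, coeff_negone, Complex.sin]
    push_cast
    ring
  have hSum2 : ∑ i ∈ Finset.range 2, (t (i:ℤ) + t (-(i:ℤ)))
      = 2*((1/π : ℝ) : ℂ) + Complex.sin x / 2 := by
    rw [Finset.sum_range_succ, Finset.sum_range_one, hsin]
    rw [show ((0:ℕ):ℤ) = 0 by norm_num, neg_zero, ht0]
    ring
  have hS : F ((x:ℝ) : AddCircle (2*π)) + t 0 - ∑ i ∈ Finset.range 2, (t (i:ℤ) + t (-(i:ℤ)))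
      = ((max (Real.sin x) 0 - 1/π - Real.sin x/2 : ℝ) : ℂ) := by
    rw [F_coe, ht0, hSum2, ← Complex.ofReal_sin]
    push_cast
    ring
  rw [hS] at H4
  have H6 := Complex.hasSum_ofReal.mp H4
  have H7 := H6.mul_left (-(π/2))
  convert H7 using 1
  · rfl
  · funext k
    have hk0 : (0:ℝ) ≤ (k:ℝ) := Nat.cast_nonneg k
    have hd : (4*((k:ℝ)+1)^2 - 1) ≠ 0 := by nlinarith [sq_nonneg ((k:ℝ))]
    field_simp
  · field_simp
    ring

lemma hasSum_tail_bound (K : ℕ) :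
    HasSum (fun n : ℕ => 1/(4*(((n+K:ℕ):ℝ)+1)^2 - 1)) (1/(2*(2*(K:ℝ)+1))) := by
  have hpos : ∀ n : ℕ, (0:ℝ) ≤ 1/(4*(((n+K:ℕ):ℝ)+1)^2 - 1) := by
    intro n
    have hk0 : (0:ℝ) ≤ ((n+K:ℕ):ℝ) := Nat.cast_nonneg _
    have : (0:ℝ) < 4*(((n+K:ℕ):ℝ)+1)^2 - 1 := by nlinarith
    positivity
  rw [hasSum_iff_tendsto_nat_of_nonneg hpos]
  have hps : ∀ N : ℕ, ∑ n ∈ Finset.range N, 1/(4*(((n+K:ℕ):ℝ)+1)^2 - 1)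
      = 1/2 * (1/(2*(K:ℝ)+1) - 1/(2*((K:ℝ)+N)+1)) := by
    intro N
    induction N with
    | zero => simp
    | succ N ih =>
      rw [Finset.sum_range_succ, ih]
      have h1 : (0:ℝ) < 2*((K:ℝ)+N)+1 := by positivity
      have h2 : (0:ℝ) < 2*((K:ℝ)+N)+3 := by positivity
      have h3 : (4*(((N+K:ℕ):ℝ)+1)^2 - 1) = (2*((K:ℝ)+N)+1)*(2*((K:ℝ)+N)+3) := by
        push_cast; ring
      rw [h3]
      push_cast
      field_simp
      ring
  apply Filter.Tendsto.congr (fun N => (hps N).symm)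
  have hat : Filter.Tendsto (fun N : ℕ => 2*((K:ℝ)+N)+1) Filter.atTop Filter.atTop :=
    Filter.tendsto_atTop_mono (fun N => by
      have h1 : (0:ℝ) ≤ (K:ℝ) := Nat.cast_nonneg _
      have h2 : (0:ℝ) ≤ (N:ℝ) := Nat.cast_nonneg _
      linarith) tendsto_natCast_atTop_atTop
  have h0 : Filter.Tendsto (fun N : ℕ => 1/(2*((K:ℝ)+N)+1)) Filter.atTop (nhds 0) := by
    simp only [one_div]
    exact hat.inv_tendsto_atTop
  have hfin := ((h0.const_sub (1/(2*(K:ℝ)+1))).const_mul (1/2))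
  have hval : (1:ℝ)/(2*(2*(K:ℝ)+1)) = 1/2 * (1/(2*(K:ℝ)+1) - 0) := by
    have : (0:ℝ) < 2*(K:ℝ)+1 := by positivity
    field_simp
    ring
  rw [hval]
  exact hfin

end ReluSinAux

end

set_option maxHeartbeats 1000000 in
/-- Uniform error bound for the truncated Fourier expansion of the half-wave rectified
sine: for every `K ≥ 1` and every real `x`,
`|max(sin x, 0) − (1/π + (1/2)·sin x − (2/π)·Σ_{k=1}^{K} cos(2kx)/(4k² − 1))|
  ≤ 1/(π(2K + 1))`. -/
theorem relu_sin_partial_sum_error (K : ℕ) (hK : 1 ≤ K) (x : ℝ) :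
    |max (Real.sin x) 0 -
        (1 / Real.pi + (1 / 2) * Real.sin x -
          (2 / Real.pi) *
            ∑ k ∈ Finset.range K,
              Real.cos (2 * (k + 1) * x) / (4 * ((k : ℝ) + 1) ^ 2 - 1))| ≤
      1 / (Real.pi * (2 * K + 1)) := by
  have hπ : (0:ℝ) < Real.pi := Real.pi_pos
  have hs := ReluSinAux.hasSum_main x
  set a : ℕ → ℝ := fun k => Real.cos (2*((k:ℝ)+1)*x) / (4*((k:ℝ)+1)^2 - 1) with ha
  have htail := (hasSum_nat_add_iff' K).mpr hs
  set S := Real.pi/2 * (1/Real.pi + Real.sin x/2 - max (Real.sin x) 0) with hSdef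
  set P := ∑ k ∈ Finset.range K, a k with hP
  have hb := ReluSinAux.hasSum_tail_bound K
  have habs : ∀ n : ℕ, |a (n+K)| ≤ 1/(4*(((n+K:ℕ):ℝ)+1)^2 - 1) := by
    intro n
    have hk0 : (0:ℝ) ≤ ((n+K:ℕ):ℝ) := Nat.cast_nonneg _
    have hd : (0:ℝ) < 4*(((n+K:ℕ):ℝ)+1)^2 - 1 := by nlinarith
    have hrfl : a (n+K) = Real.cos (2*(((n+K:ℕ):ℝ)+1)*x) / (4*(((n+K:ℕ):ℝ)+1)^2 - 1) := rfl
    rw [hrfl, abs_div, abs_of_pos hd]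
    exact (div_le_div_iff_of_pos_right hd).mpr (Real.abs_cos_le_one _)
  have hT : |S - P| ≤ 1/(2*(2*(K:ℝ)+1)) := by
    rw [abs_le]
    constructor
    · apply hasSum_le _ hb.neg htail
      intro n
      calc -(1/(4*(((n+K:ℕ):ℝ)+1)^2 - 1)) ≤ -|a (n+K)| := by
            simpa using neg_le_neg (habs n)
        _ ≤ a (n+K) := neg_abs_le _
    · apply hasSum_le _ htail hb
      intro n
      exact le_trans (le_abs_self _) (habs n)
  have hmax : max (Real.sin x) 0 = 1/Real.pi + (1/2)*Real.sin x - (2/Real.pi)*S := by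
    rw [hSdef]
    field_simp
    ring
  rw [hmax]
  have hrw : (1/Real.pi + (1/2)*Real.sin x - (2/Real.pi)*S)
      - (1/Real.pi + (1/2)*Real.sin x - (2/Real.pi)*P) = (2/Real.pi)*(P - S) := by ring
  rw [hrw, abs_mul, abs_of_pos (by positivity : (0:ℝ) < 2/Real.pi), abs_sub_comm]
  calc (2/Real.pi) * |S - P| ≤ (2/Real.pi) * (1/(2*(2*(K:ℝ)+1))) := by
        apply mul_le_mul_of_nonneg_left hT (by positivity)
    _ = 1 / (Real.pi * (2*(K:ℝ)+1)) := by
        have h1 : (0:ℝ) < 2*(K:ℝ)+1 := by positivity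
        field_simp
end

section
/- Let B > 0 and Fs > 2B. Suppose f, g : ℝ → ℂ are continuous and integrable, their Fourier transforms 𝓕f and 𝓕g are integrable and supported in the interval [−B, B], and f(n/Fs) = g(n/Fs) for every integer n. Then f = g. -/
open MeasureTheory

open Set Complex FourierTransform Real in
/-- Uniqueness of Fourier coefficients for `Memℒp` functions on the circle. -/
theorem nyquist_aux_fourierCoeff_eq_zero {T : ℝ} [hT : Fact (0 < T)] (φ : AddCircle T → ℂ)
    (hmem : MemLp φ 2 AddCircle.haarAddCircle)
    (hc : ∀ n : ℤ, fourierCoeff φ n = 0) : φ =ᵐ[AddCircle.haarAddCircle] 0 := by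
  set φL := hmem.toLp φ with hφL
  have hcoeL : ∀ n : ℤ, fourierCoeff (φL : AddCircle T → ℂ) n = 0 := by
    intro n
    rw [← hc n]
    apply integral_congr_ae
    filter_upwards [hmem.coeFn_toLp] with t ht
    rw [ht]
  have hsum := hasSum_fourier_series_L2 φL
  simp only [hcoeL, zero_smul] at hsum
  have h0 : φL = 0 := hsum.unique hasSum_zero
  calc φ =ᵐ[AddCircle.haarAddCircle] φL := hmem.coeFn_toLp.symm
    _ =ᵐ[AddCircle.haarAddCircle] 0 := by rw [h0]; exact Lp.coeFn_zero _ _ _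

open Set Complex FourierTransform Real in
/-- **Nyquist–Shannon sampling theorem (uniqueness form)**: two continuous integrable
signals that are bandlimited to `[−B, B]` (their integrable Fourier transforms vanish
outside `[−B, B]`) and agree on the samples `n / Fs`, for a sampling rate `Fs > 2B`,
are equal. -/
theorem nyquist_shannon_uniqueness (B Fs : ℝ) (hB : 0 < B) (hFs : 2 * B < Fs)
    (f g : ℝ → ℂ) (hfc : Continuous f) (hgc : Continuous g)
    (hfi : Integrable f) (hgi : Integrable g)
    (hFfi : Integrable (FourierTransform.fourier f))
    (hFgi : Integrable (FourierTransform.fourier g))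
    (hFf : ∀ ω : ℝ, ω ∉ Set.Icc (-B) B → FourierTransform.fourier f ω = 0)
    (hFg : ∀ ω : ℝ, ω ∉ Set.Icc (-B) B → FourierTransform.fourier g ω = 0)
    (hsample : ∀ n : ℤ, f ((n : ℝ) / Fs) = g ((n : ℝ) / Fs)) :
    f = g := by
  have hFs0 : 0 < Fs := by linarith
  haveI : Fact (0 < Fs) := ⟨hFs0⟩
  set a : ℝ := -(Fs / 2) with ha
  have hle : a ≤ a + Fs := by simp [ha]; linarith
  have hsub : Set.Icc (-B) B ⊆ Set.Ioc a (a + Fs) := by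
    intro x hx
    simp only [Set.mem_Icc] at hx
    constructor <;> simp only [ha] <;> [linarith; linarith]
  -- the difference signal
  set h : ℝ → ℂ := fun x => f x - g x with hh
  have hhc : Continuous h := hfc.sub hgc
  have hhi : Integrable h := hfi.sub hgi
  set F : ℝ → ℂ := FourierTransform.fourier h with hF
  have hFh : ∀ w, F w = FourierTransform.fourier f w - FourierTransform.fourier g w := by
    intro w
    simp only [hF, hh, Real.fourier_eq]
    rw [← integral_sub ((Real.fourierIntegral_convergent_iff w).2 hfi)
        ((Real.fourierIntegral_convergent_iff w).2 hgi)]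
    simp [smul_sub]
  have hFhi : Integrable F := by
    have : F = fun w => FourierTransform.fourier f w - FourierTransform.fourier g w := funext hFh
    rw [this]
    exact hFfi.sub hFgi
  have hF0 : ∀ ω : ℝ, ω ∉ Set.Icc (-B) B → F ω = 0 := by
    intro ω hω
    rw [hFh, hFf ω hω, hFg ω hω, sub_zero]
  have hFcont : Continuous F :=
    VectorFourier.fourierIntegral_continuous (L := innerₗ ℝ) Real.continuous_fourierChar
      (by exact continuous_inner) hhi
  have hFbound : ∀ w, ‖F w‖ ≤ ∫ v, ‖h v‖ := fun w =>
    VectorFourier.norm_fourierIntegral_le_integral_norm _ _ (innerₗ ℝ) _ _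
  -- Fourier inversion for h
  have hinv : ∀ x, 𝓕⁻ F x = h x := fun x => hhi.fourierInv_fourier_eq hFhi hhc.continuousAt
  -- periodization of F on the circle of circumference Fs
  set φ : AddCircle Fs → ℂ := AddCircle.liftIoc Fs a F with hφ
  have hφmeas : Measurable φ := by
    exact (hFcont.measurable.comp measurable_subtype_coe).comp
      (AddCircle.measurableEquivIoc Fs a).measurable
  have hφmem : MemLp φ 2 AddCircle.haarAddCircle := by
    apply MemLp.of_bound hφmeas.aestronglyMeasurable (∫ v, ‖h v‖)
    filter_upwards with x
    simp only [hφ, AddCircle.liftIoc, Function.comp_apply, Set.restrict_apply]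
    exact hFbound _
  -- samples are Fourier coefficients
  have hkey : ∀ m : ℤ,
      (∫ x in Set.Ioc a (a + Fs), (fourier m (x : AddCircle Fs) : ℂ) • F x) = h ((m : ℝ) / Fs) := by
    intro m
    calc (∫ x in Set.Ioc a (a + Fs), (fourier m (x : AddCircle Fs) : ℂ) • F x)
        = ∫ x in Set.Ioc a (a + Fs), 𝐞 ((inner ℝ x ((m : ℝ) / Fs) : ℝ)) • F x := by
          apply setIntegral_congr_fun measurableSet_Ioc
          intro x _
          dsimp only
          rw [Circle.smul_def, smul_eq_mul]
          congr 1
          rw [fourier_coe_apply, Real.fourierChar_apply, RCLike.inner_apply]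
          simp only [conj_trivial]
          congr 1
          push_cast
          ring
      _ = ∫ x, 𝐞 ((inner ℝ x ((m : ℝ) / Fs) : ℝ)) • F x := by
          apply setIntegral_eq_integral_of_forall_compl_eq_zero
          intro x hx
          rw [hF0 x (fun hc => hx (hsub hc)), smul_zero]
      _ = 𝓕⁻ F ((m : ℝ) / Fs) := (Real.fourierInv_eq F _).symm
      _ = h ((m : ℝ) / Fs) := hinv _
  have hsample0 : ∀ m : ℤ, h ((m : ℝ) / Fs) = 0 := by
    intro m
    simp only [hh, hsample m, sub_self]
  have hcoeff : ∀ n : ℤ, fourierCoeff φ n = 0 := by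
    intro n
    rw [fourierCoeff_eq_intervalIntegral φ n a, intervalIntegral.integral_of_le hle]
    have : (∫ x in Set.Ioc a (a + Fs), (fourier (-n) (x : AddCircle Fs) : ℂ) • φ (x : ℝ))
        = ∫ x in Set.Ioc a (a + Fs), (fourier (-n) (x : AddCircle Fs) : ℂ) • F x := by
      apply setIntegral_congr_fun measurableSet_Ioc
      intro x hx
      dsimp only
      rw [hφ, AddCircle.liftIoc_coe_apply hx]
    rw [this, hkey (-n), hsample0 (-n), smul_zero]
  -- conclude φ vanishes a.e.
  have hφ0 : φ =ᵐ[AddCircle.haarAddCircle] 0 := nyquist_aux_fourierCoeff_eq_zero φ hφmem hcoeff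
  have hφ0' : φ =ᵐ[(volume : Measure (AddCircle Fs))] 0 := by
    rw [AddCircle.volume_eq_smul_haarAddCircle]
    exact Measure.ae_smul_measure hφ0 _
  -- transfer to the real line
  have hres : ∀ᵐ x ∂(volume.restrict (Set.Ioc a (a + Fs))), F x = 0 := by
    have hmk := (AddCircle.measurePreserving_mk Fs a).quasiMeasurePreserving
    have h1 : ∀ᵐ x ∂(volume.restrict (Set.Ioc a (a + Fs))), φ ((x : ℝ) : AddCircle Fs) = 0 := by
      have := hmk.ae (p := fun y => φ y = 0) ?_
      · exact this
      · filter_upwards [hφ0'] with y hy using hy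
    filter_upwards [h1, ae_restrict_mem measurableSet_Ioc] with x hx hmem
    have h2 := AddCircle.liftIoc_coe_apply (f := F) hmem
    rw [hφ] at hx
    rw [← h2]
    exact hx
  have hFae : ∀ᵐ x, F x = 0 := by
    have h1 := (ae_restrict_iff' measurableSet_Ioc).mp hres
    filter_upwards [h1] with x hx
    by_cases hmem : x ∈ Set.Ioc a (a + Fs)
    · exact hx hmem
    · exact hF0 x (fun hc => hmem (hsub hc))
  -- inversion: h = 0
  have hzero : ∀ x, h x = 0 := by
    intro x
    rw [← hinv x, Real.fourierInv_eq]
    rw [integral_congr_ae (g := fun _ => (0 : ℂ))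
      (by filter_upwards [hFae] with v hv; rw [hv, smul_zero])]
    simp
  funext x
  exact sub_eq_zero.mp (hzero x)
end
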